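/- For every t₀ ∈ [0,1) and every sequence (a_k)_{k ≥ 1} of real numbers, there exists a piecewise-smooth bounded loop γ with breaks in {t₀} + ℤ such that for every k ≥ 1 the one-sided limits of the k-th derivative satisfy γ⁽ᵏ⁾(t₀+) − γ⁽ᵏ⁾(t₀−) = a_k. -/

import Mathlib

/-- The set `F + ℤ = {f + k : f ∈ F, k ∈ ℤ}` of integer translates of points of `F`. -/
def BreaksSet (F : Set ℝ) : Set ℝ := {x : ℝ | ∃ f ∈ F, ∃ k : ℤ, x = f + k}

/-- `γ` is a loop (1-periodic), continuous, and infinitely differentiable off `F + ℤ`;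
i.e. a piecewise-smooth loop with breaks in `F + ℤ`. -/
def HasBreaksIn (γ : ℝ → ℝ) (F : Set ℝ) : Prop :=
  (∀ t, γ (t + 1) = γ t) ∧ Continuous γ ∧ ContDiffOn ℝ (⊤ : ℕ∞) γ (BreaksSet F)ᶜ

/-- `γ` is a piecewise-smooth loop. -/
def IsPiecewiseSmooth (γ : ℝ → ℝ) : Prop :=
  ∃ F : Set ℝ, F.Finite ∧ F ⊆ Set.Ico 0 1 ∧ HasBreaksIn γ F

/-- A piecewise-smooth loop with breaks in `F + ℤ`, all of whose derivatives are
bounded on the complement of the breaks. -/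
def BoundedBreaksIn (γ : ℝ → ℝ) (F : Set ℝ) : Prop :=
  HasBreaksIn γ F ∧ ∀ k : ℕ, ∃ M : ℝ, ∀ t ∈ (BreaksSet F)ᶜ, |iteratedDeriv k γ t| ≤ M

/-- `γ` is a piecewise-smooth bounded loop. -/
def IsPiecewiseSmoothBounded (γ : ℝ → ℝ) : Prop :=
  ∃ F : Set ℝ, F.Finite ∧ F ⊆ Set.Ico 0 1 ∧ BoundedBreaksIn γ F

/-- The right limit of `f` at `t`, with the variable ranging outside the set `B`. -/
def RightLimAt (f : ℝ → ℝ) (B : Set ℝ) (t L : ℝ) : Prop :=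
  Filter.Tendsto f (nhdsWithin t (Set.Ioi t \ B)) (nhds L)

/-- The left limit of `f` at `t`, with the variable ranging outside the set `B`. -/
def LeftLimAt (f : ℝ → ℝ) (B : Set ℝ) (t L : ℝ) : Prop :=
  Filter.Tendsto f (nhdsWithin t (Set.Iio t \ B)) (nhds L)

/-- `t` is a sign-change point of `f` (relative to the break set `B`): the one-sided
limits of `f` at `t` exist and have opposite nonzero signs. -/
def SignChangeAt (f : ℝ → ℝ) (B : Set ℝ) (t : ℝ) : Prop :=
  ∃ Lp Lm : ℝ, RightLimAt f B t Lp ∧ LeftLimAt f B t Lm ∧ Lp * Lm < 0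

/-- The 1-periodic step function equal to `1` on `[0, 1/2) + ℤ` and `-1` on `[1/2, 1) + ℤ`. -/
noncomputable def stepLoop : ℝ → ℝ := fun t => if Int.fract t < 1/2 then 1 else -1

open Filter Topology Set Metric


open Filter Topology Set Metric

noncomputable def myBump : ContDiffBump (0:ℝ) := ⟨1/8, 1/4, by norm_num, by norm_num⟩

lemma iterDeriv_pow (k : ℕ) (n : ℕ) :
    iteratedDeriv n (fun x : ℝ => x ^ k) = fun x => (k.descFactorial n : ℝ) * x ^ (k - n) := by
  induction n with
  | zero => simp
  | succ n ih =>
    rw [iteratedDeriv_succ, ih]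
    funext x
    rw [deriv_const_mul _ (differentiableAt_pow _), deriv_pow_field, Nat.descFactorial_succ,
      ← Nat.sub_sub]
    push_cast
    ring

lemma iterDeriv_zero_fun (n : ℕ) : iteratedDeriv n (fun _ : ℝ => (0:ℝ)) = fun _ => 0 := by
  induction n with
  | zero => rfl
  | succ n ih => rw [iteratedDeriv_succ, ih]; funext x; exact deriv_const x 0

lemma borel_aux (b : ℕ → ℝ) (hb0 : b 0 = 0) :
    ∃ g : ℝ → ℝ, ContDiff ℝ ((⊤:ℕ∞) : WithTop ℕ∞) g ∧
      (∀ x : ℝ, 1/4 ≤ |x| → g x = 0) ∧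
      (∀ j : ℕ, iteratedDeriv j g 0 = b j) ∧
      (∀ j : ℕ, ∃ M : ℝ, ∀ x : ℝ, |iteratedDeriv j g x| ≤ M) := by
  classical
  set ψ : ℝ → ℝ := fun x => myBump x with hψdef
  have hψs : ContDiff ℝ ((⊤:ℕ∞) : WithTop ℕ∞) ψ := myBump.contDiff
  set G : ℕ → ℝ → ℝ := fun k y => y ^ k / (k.factorial : ℝ) * ψ y with hGdef
  have hGsmooth : ∀ k, ContDiff ℝ ((⊤:ℕ∞) : WithTop ℕ∞) (G k) :=
    fun k => ((contDiff_id.pow k).div_const _).mul hψs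
  have hGsupp : ∀ k y, 1/4 ≤ |y| → G k y = 0 := by
    intro k y hy
    have h0 : ψ y = 0 := myBump.zero_of_le_dist (by simpa [myBump, Real.dist_eq] using hy)
    simp [hGdef, h0]
  have hGcs : ∀ k, HasCompactSupport (G k) := by
    intro k
    refine HasCompactSupport.intro (isCompact_closedBall (0:ℝ) 1) (fun y hy => hGsupp k y ?_)
    rw [mem_closedBall, Real.dist_eq, sub_zero, not_le] at hy
    linarith
  have hB : ∀ k j : ℕ, ∃ C : ℝ, ∀ y, ‖iteratedFDeriv ℝ j (G k) y‖ ≤ C := by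
    intro k j
    exact Continuous.bounded_above_of_compact_support
      (ContDiff.continuous_iteratedFDeriv (by exact_mod_cast le_top) (hGsmooth k))
      ((hGcs k).iteratedFDeriv j)
  choose B hBs using hB
  have hBnn : ∀ k j, 0 ≤ B k j := fun k j => le_trans (norm_nonneg _) (hBs k j 0)
  have hBs' : ∀ k j y, |iteratedDeriv j (G k) y| ≤ B k j := by
    intro k j y
    rw [← Real.norm_eq_abs, ← norm_iteratedFDeriv_eq_norm_iteratedDeriv]
    exact hBs k j y
  set S : ℕ → ℝ := fun k => ∑ j ∈ Finset.range k, B k j with hSdef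
  have hSnn : ∀ k, 0 ≤ S k := fun k => Finset.sum_nonneg (fun j _ => hBnn k j)
  have hBleS : ∀ k j, j < k → B k j ≤ S k := fun k j hj =>
    Finset.single_le_sum (f := fun j => B k j) (fun i _ => hBnn k i) (Finset.mem_range.mpr hj)
  set c : ℕ → ℝ := fun k => max 1 (2^k * (|b k| + 1) * (S k + 1)) with hcdef
  have hc1 : ∀ k, 1 ≤ c k := fun k => le_max_left _ _
  have hc0 : ∀ k, 0 < c k := fun k => lt_of_lt_of_le one_pos (hc1 k)
  have hck : ∀ k, 2^k * (|b k| + 1) * (S k + 1) ≤ c k := fun k => le_max_right _ _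
  set F : ℕ → ℝ → ℝ := fun k x => (b k / c k ^ k) * G k (c k * x) with hFdef
  have hFsmooth : ∀ k, ContDiff ℝ ((⊤:ℕ∞) : WithTop ℕ∞) (F k) :=
    fun k => contDiff_const.mul ((hGsmooth k).comp (contDiff_const.mul contDiff_id))
  -- derivative formula
  have hfd : ∀ k j x, iteratedDeriv j (F k) x
      = (b k / c k ^ k) * (c k ^ j * iteratedDeriv j (G k) (c k * x)) := by
    intro k j x
    have h1 : iteratedDeriv j (fun x => G k (c k * x))
        = fun x => c k ^ j * iteratedDeriv j (G k) (c k * x) :=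
      iteratedDeriv_comp_const_mul ((hGsmooth k).of_le (by exact_mod_cast le_top)) (c k)
    have h2 : iteratedDeriv j (F k) x
        = (b k / c k ^ k) * iteratedDeriv j (fun x => G k (c k * x)) x := by
      rw [← iteratedDerivWithin_univ, ← iteratedDerivWithin_univ]
      exact iteratedDerivWithin_const_mul (mem_univ x) uniqueDiffOn_univ _
        (((hGsmooth k).comp (contDiff_const.mul contDiff_id)).of_le
          (by exact_mod_cast le_top)).contDiffWithinAt
    rw [h2, h1]
  -- uniform bounds
  set v : ℕ → ℕ → ℝ := fun j k => if k ≤ j then |b k| * (c k ^ j * B k j) else (1/2)^k with hvdef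
  have hFb : ∀ j k x, ‖iteratedFDeriv ℝ j (F k) x‖ ≤ v j k := by
    intro j k x
    rw [norm_iteratedFDeriv_eq_norm_iteratedDeriv, Real.norm_eq_abs, hfd]
    have hq : |iteratedDeriv j (G k) (c k * x)| ≤ B k j := hBs' k j _
    have habs : |(b k / c k ^ k) * (c k ^ j * iteratedDeriv j (G k) (c k * x))|
        = |b k| / c k ^ k * (c k ^ j * |iteratedDeriv j (G k) (c k * x)|) := by
      rw [abs_mul, abs_mul, abs_div, abs_pow, abs_pow, abs_of_pos (hc0 k)]
    rw [habs]
    have hckpos : (0:ℝ) < c k ^ k := pow_pos (hc0 k) k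
    by_cases hkj : k ≤ j
    · rw [hvdef]
      simp only [if_pos hkj]
      have h1 : |b k| / c k ^ k ≤ |b k| := div_le_self (abs_nonneg _) (one_le_pow₀ (hc1 k))
      refine mul_le_mul h1 ?_ (by positivity) (abs_nonneg _)
      exact mul_le_mul_of_nonneg_left hq (by positivity)
    · rw [hvdef]
      push_neg at hkj
      simp only [if_neg (not_le.mpr hkj)]
      have step1 : |b k| / c k ^ k * (c k ^ j * |iteratedDeriv j (G k) (c k * x)|)
          ≤ |b k| / c k ^ k * (c k ^ j * B k j) := by
        refine mul_le_mul_of_nonneg_left ?_ (by positivity)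
        exact mul_le_mul_of_nonneg_left hq (by positivity)
      refine step1.trans ?_
      rw [div_mul_eq_mul_div, div_le_iff₀ hckpos]
      have key : |b k| * B k j ≤ (|b k| + 1) * (S k + 1) :=
        mul_le_mul (by linarith) (by linarith [hBleS k j hkj]) (hBnn k j) (by positivity)
      have h2k : (1/2:ℝ)^k * 2^k = 1 := by
        rw [← mul_pow]; norm_num
      have hpow : c k ^ j * c k ≤ c k ^ k := by
        have h' : c k ^ (j+1) ≤ c k ^ k := pow_le_pow_right₀ (hc1 k) hkj
        calc c k ^ j * c k = c k ^ (j+1) := by rw [pow_succ]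
          _ ≤ c k ^ k := h'
      calc |b k| * (c k ^ j * B k j) = (|b k| * B k j) * c k ^ j := by ring
        _ ≤ ((|b k| + 1) * (S k + 1)) * c k ^ j :=
            mul_le_mul_of_nonneg_right key (by positivity)
        _ = (1/2)^k * (2^k * (|b k| + 1) * (S k + 1)) * c k ^ j := by
            rw [show (1/2:ℝ)^k * (2^k * (|b k| + 1) * (S k + 1))
              = ((1/2:ℝ)^k * 2^k) * ((|b k| + 1) * (S k + 1)) by ring, h2k, one_mul]
        _ ≤ (1/2)^k * c k * c k ^ j := by
            refine mul_le_mul_of_nonneg_right ?_ (by positivity)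
            exact mul_le_mul_of_nonneg_left (hck k) (by positivity)
        _ = (1/2)^k * (c k ^ j * c k) := by ring
        _ ≤ (1/2)^k * c k ^ k := mul_le_mul_of_nonneg_left hpow (by positivity)
  -- summability
  have hvsum : ∀ j, Summable (v j) := by
    intro j
    rw [← summable_nat_add_iff (j+1)]
    have heq : (fun i => v j (i + (j+1))) = fun i => (1/2:ℝ)^(j+1) * (1/2)^i := by
      funext i
      rw [hvdef]
      simp only [if_neg (by omega : ¬ (i + (j+1) ≤ j))]
      rw [pow_add]; ring
    rw [heq]
    exact (summable_geometric_of_lt_one (by norm_num) (by norm_num)).mul_left _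
  set g : ℝ → ℝ := fun x => ∑' k, F k x with hgdef
  have hgsmooth : ContDiff ℝ ((⊤:ℕ∞) : WithTop ℕ∞) g :=
    contDiff_tsum (fun k => hFsmooth k) (fun k _ => hvsum k) (fun k i x _ => hFb k i x)
  have hgFD : ∀ (j:ℕ) (x:ℝ), iteratedFDeriv ℝ j g x = ∑' k, iteratedFDeriv ℝ j (F k) x :=
    fun j x => iteratedFDeriv_tsum_apply (fun k => hFsmooth k) (fun k _ => hvsum k)
      (fun k i x _ => hFb k i x) le_top x
  have hgbound : ∀ j x, |iteratedDeriv j g x| ≤ ∑' k, v j k := by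
    intro j x
    rw [← Real.norm_eq_abs, ← norm_iteratedFDeriv_eq_norm_iteratedDeriv, hgFD]
    have hs : Summable (fun k => ‖iteratedFDeriv ℝ j (F k) x‖) :=
      (hvsum j).of_nonneg_of_le (fun _ => norm_nonneg _) (fun k => hFb j k x)
    calc ‖∑' k, iteratedFDeriv ℝ j (F k) x‖ ≤ ∑' k, ‖iteratedFDeriv ℝ j (F k) x‖ :=
        norm_tsum_le_tsum_norm hs
      _ ≤ ∑' k, v j k := Summable.tsum_le_tsum (fun k => hFb j k x) hs (hvsum j)
  -- value of iterated derivatives of each F k at 0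
  have hF0 : ∀ k j, iteratedDeriv j (F k) 0 = if j = k then b k else 0 := by
    intro k j
    have hev : F k =ᶠ[nhds (0:ℝ)] fun x => (b k / (k.factorial:ℝ)) * x ^ k := by
      filter_upwards [Metric.ball_mem_nhds (0:ℝ)
        (show (0:ℝ) < 1/(8 * c k) by positivity)] with x hx
      have hx' : |x| < 1/(8 * c k) := by
        rwa [mem_ball, Real.dist_eq, sub_zero] at hx
      have h8 : |c k * x| ≤ 1/8 := by
        rw [abs_mul, abs_of_pos (hc0 k)]
        have := mul_le_mul_of_nonneg_left hx'.le (hc0 k).le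
        calc c k * |x| ≤ c k * (1/(8 * c k)) := this
          _ = 1/8 := by field_simp [(hc0 k).ne']
      have hψ1 : ψ (c k * x) = 1 := by
        refine myBump.one_of_mem_closedBall ?_
        rw [mem_closedBall, Real.dist_eq, sub_zero]
        exact h8.trans_eq rfl
      show (b k / c k ^ k) * G k (c k * x) = b k / (k.factorial:ℝ) * x ^ k
      rw [hGdef]
      simp only []
      rw [hψ1, mul_one, mul_pow]
      have hcne : c k ^ k ≠ 0 := ne_of_gt (pow_pos (hc0 k) k)
      field_simp
    rw [hev.iteratedDeriv_eq j]
    have hmul : iteratedDeriv j (fun x : ℝ => (b k / (k.factorial:ℝ)) * x ^ k) 0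
        = (b k / (k.factorial:ℝ)) * iteratedDeriv j (fun x : ℝ => x ^ k) 0 := by
      rw [← iteratedDerivWithin_univ, ← iteratedDerivWithin_univ]
      exact iteratedDerivWithin_const_mul (mem_univ 0) uniqueDiffOn_univ _
        ((contDiff_id.pow k).of_le (by exact_mod_cast le_top)).contDiffWithinAt
    rw [hmul, iterDeriv_pow]
    by_cases hjk : j = k
    · subst hjk
      rw [if_pos rfl, Nat.descFactorial_self]
      simp only [Nat.sub_self, pow_zero, mul_one]
      have : (j.factorial : ℝ) ≠ 0 := Nat.cast_ne_zero.mpr j.factorial_ne_zero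
      field_simp
    · rw [if_neg hjk]
      rcases Nat.lt_or_ge j k with h | h
      · simp [zero_pow (show k - j ≠ 0 by omega)]
      · have : k < j := lt_of_le_of_ne h (fun e => hjk e.symm)
        simp [Nat.descFactorial_eq_zero_iff_lt.mpr this]
  have hg0 : ∀ j, iteratedDeriv j g 0 = b j := by
    intro j
    rw [iteratedDeriv_eq_iteratedFDeriv, hgFD j 0, tsum_eq_single j ?_]
    · rw [← iteratedDeriv_eq_iteratedFDeriv, hF0 j j, if_pos rfl]
    · intro k hk
      have h0 : iteratedDeriv j (F k) 0 = 0 := by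
        rw [hF0 k j, if_neg (fun e => hk e.symm)]
      have hn : ‖iteratedFDeriv ℝ j (F k) 0‖ = 0 := by
        rw [norm_iteratedFDeriv_eq_norm_iteratedDeriv, h0, norm_zero]
      exact norm_eq_zero.mp hn
  have hgsupp : ∀ x, 1/4 ≤ |x| → g x = 0 := by
    intro x hx
    have hz : ∀ k, F k x = 0 := by
      intro k
      have h14 : (1:ℝ)/4 ≤ |c k * x| := by
        rw [abs_mul, abs_of_pos (hc0 k)]
        calc (1:ℝ)/4 ≤ |x| := hx
          _ = 1 * |x| := (one_mul _).symm
          _ ≤ c k * |x| := mul_le_mul_of_nonneg_right (hc1 k) (abs_nonneg x)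
      rw [hFdef]
      simp only []
      rw [hGsupp k _ h14, mul_zero]
    calc g x = ∑' k, F k x := rfl
      _ = ∑' (_ : ℕ), (0:ℝ) := tsum_congr hz
      _ = 0 := tsum_zero
  exact ⟨g, hgsmooth, hgsupp, hg0, fun j => ⟨∑' k, v j k, fun x => hgbound j x⟩⟩

theorem stmt8' (t₀ : ℝ) (ht₀ : t₀ ∈ Set.Ico (0:ℝ) 1) (a : ℕ → ℝ) :
    ∃ γ : ℝ → ℝ, BoundedBreaksIn γ {t₀} ∧
      ∀ k : ℕ, 1 ≤ k → ∃ Lp Lm : ℝ,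
        RightLimAt (iteratedDeriv k γ) (BreaksSet {t₀}) t₀ Lp ∧
        LeftLimAt (iteratedDeriv k γ) (BreaksSet {t₀}) t₀ Lm ∧
        Lp - Lm = a k := by
  classical
  set b : ℕ → ℝ := fun k => if k = 0 then 0 else a k with hbdef
  obtain ⟨g, hgs, hgsupp, hg0, hgbdd⟩ := borel_aux b (by simp [hbdef])
  set B : Set ℝ := BreaksSet {t₀} with hBdef
  set γ : ℝ → ℝ := fun t => g (Int.fract (t - t₀)) with hγdef
  -- key local representation
  have hkey : ∀ (n : ℤ) (s : ℝ), t₀ + n ≤ s → s < t₀ + n + 1 → γ s = g (s - (t₀ + n)) := by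
    intro n s h1 h2
    have hfl : ⌊s - t₀⌋ = n := Int.floor_eq_iff.mpr ⟨by linarith, by push_cast; linarith⟩
    show g (Int.fract (s - t₀)) = g (s - (t₀ + n))
    rw [Int.fract, hfl]
    congr 1
    ring
  -- points off the break set
  have hnotB : ∀ x : ℝ, x ∉ B → t₀ + (⌊x - t₀⌋ : ℝ) < x ∧ x < t₀ + (⌊x - t₀⌋ : ℝ) + 1 := by
    intro x hx
    have h1 : (⌊x - t₀⌋ : ℝ) ≤ x - t₀ := Int.floor_le _
    have h2 : x - t₀ < ⌊x - t₀⌋ + 1 := Int.lt_floor_add_one _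
    refine ⟨?_, by linarith⟩
    rcases lt_or_eq_of_le h1 with h | h
    · linarith
    · exfalso
      exact hx ⟨t₀, Set.mem_singleton t₀, ⌊x - t₀⌋, by linarith⟩
  have hsm : ∀ n : ℤ, ContDiff ℝ ((⊤:ℕ∞) : WithTop ℕ∞) (fun s : ℝ => g (s - (t₀ + n))) :=
    fun n => hgs.comp (contDiff_id.sub contDiff_const)
  -- eventual equality off breaks
  have hev : ∀ x : ℝ, x ∉ B →
      γ =ᶠ[nhds x] (fun s => g (s - (t₀ + (⌊x - t₀⌋ : ℤ)))) := by
    intro x hx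
    obtain ⟨hx1, hx2⟩ := hnotB x hx
    filter_upwards [Ioo_mem_nhds hx1 hx2] with s hs
    exact hkey ⌊x - t₀⌋ s hs.1.le hs.2
  -- derivative identity off breaks
  have hder : ∀ (j : ℕ) (x : ℝ), x ∉ B →
      iteratedDeriv j γ x = iteratedDeriv j g (x - (t₀ + (⌊x - t₀⌋ : ℝ))) := by
    intro j x hx
    rw [(hev x hx).iteratedDeriv_eq j]
    have h := iteratedDeriv_comp_add_const j g (-(t₀ + (⌊x - t₀⌋ : ℝ)))
    simp only [← sub_eq_add_neg] at h
    exact congrFun h x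
  -- periodicity
  have hper : ∀ t, γ (t + 1) = γ t := by
    intro t
    show g (Int.fract (t + 1 - t₀)) = g (Int.fract (t - t₀))
    rw [show t + 1 - t₀ = t - t₀ + 1 by ring, Int.fract_add_one]
  -- continuity
  have hg00 : g 0 = 0 := by
    have := hg0 0
    rw [iteratedDeriv_zero] at this
    simpa [hbdef] using this
  have hcont : Continuous γ := by
    have h01 : g 0 = g 1 := by
      rw [hg00, hgsupp 1 (by rw [abs_one]; norm_num)]
    exact (ContinuousOn.comp_fract'' hgs.continuous.continuousOn h01).comp
      (continuous_id.sub continuous_const)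
  -- smoothness off breaks
  have hcd : ContDiffOn ℝ ((⊤:ℕ∞) : WithTop ℕ∞) γ Bᶜ := by
    intro x hx
    exact (((hsm ⌊x - t₀⌋).contDiffAt).congr_of_eventuallyEq (hev x hx)).contDiffWithinAt
  -- bounded derivatives
  have hbdd : ∀ j : ℕ, ∃ M : ℝ, ∀ t ∈ Bᶜ, |iteratedDeriv j γ t| ≤ M := by
    intro j
    obtain ⟨M, hM⟩ := hgbdd j
    exact ⟨M, fun t ht => by rw [hder j t ht]; exact hM _⟩
  refine ⟨γ, ⟨⟨hper, hcont, hcd⟩, hbdd⟩, ?_⟩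
  intro k hk
  refine ⟨a k, 0, ?_, ?_, sub_zero (a k)⟩
  · -- right limit
    have hcder : Continuous (iteratedDeriv k g) :=
      hgs.continuous_iteratedDeriv k (by exact_mod_cast le_top)
    have hbk : b k = a k := by
      have hk0 : k ≠ 0 := by omega
      simp [hbdef, hk0]
    have base : Filter.Tendsto (fun s => iteratedDeriv k g (s - t₀)) (nhds t₀) (nhds (a k)) := by
      have h1 : Filter.Tendsto (fun s : ℝ => s - t₀) (nhds t₀) (nhds 0) := by
        simpa using (continuous_sub_right t₀).tendsto t₀
      have h2 := (hcder.tendsto 0).comp h1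
      rw [hg0 k, hbk] at h2
      exact h2
    have ev : (fun s => iteratedDeriv k γ s)
        =ᶠ[nhdsWithin t₀ (Set.Ioi t₀ \ B)] (fun s => iteratedDeriv k g (s - t₀)) := by
      filter_upwards [self_mem_nhdsWithin,
        nhdsWithin_le_nhds (Iio_mem_nhds (show t₀ < t₀ + 1 by linarith))] with s hs1 hs2
      have hA : t₀ < s := hs1.1
      have hB' : s < t₀ + 1 := hs2
      have hfl : ⌊s - t₀⌋ = 0 := Int.floor_eq_iff.mpr
        (by constructor <;> push_cast <;> linarith)
      rw [hder k s hs1.2, hfl]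
      norm_num
    exact Filter.Tendsto.congr' ev.symm (base.mono_left nhdsWithin_le_nhds)
  · -- left limit
    have ev2 : (fun s => iteratedDeriv k γ s)
        =ᶠ[nhdsWithin t₀ (Set.Iio t₀ \ B)] (fun _ => (0:ℝ)) := by
      filter_upwards [self_mem_nhdsWithin,
        nhdsWithin_le_nhds (Ioi_mem_nhds (show t₀ - 1/2 < t₀ by linarith))] with s hs1 hs2
      have hs3 : s < t₀ := hs1.1
      have hs4 : t₀ - 1/2 < s := hs2
      have hzero : ∀ z ∈ Set.Ioo (t₀ - 1/2) t₀, γ z = 0 := by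
        intro z hz
        have hzkey : γ z = g (z - (t₀ + (-1 : ℤ))) := by
          refine hkey (-1) z ?_ ?_ <;> push_cast <;> [linarith [hz.1]; linarith [hz.2]]
        rw [hzkey]
        refine hgsupp _ ?_
        push_cast
        rw [abs_of_pos (by linarith [hz.1])]
        linarith [hz.1]
      have hev0 : γ =ᶠ[nhds s] (fun _ => (0:ℝ)) := by
        filter_upwards [Ioo_mem_nhds hs4 hs3] with z hz
        exact hzero z hz
      rw [hev0.iteratedDeriv_eq k]
      exact congrFun (iterDeriv_zero_fun k) s
    exact Filter.Tendsto.congr' ev2.symm tendsto_const_nhds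

/-- (Borel-type theorem.) For every `t₀ ∈ [0,1)` and every sequence
`(a_k)_{k ≥ 1}` of reals there is a piecewise-smooth bounded loop `γ` with breaks in
`{t₀} + ℤ` whose one-sided limits of the `k`-th derivative at `t₀` satisfy
`γ⁽ᵏ⁾(t₀+) − γ⁽ᵏ⁾(t₀−) = a k` for every `k ≥ 1`. -/
theorem stmt8 (t₀ : ℝ) (ht₀ : t₀ ∈ Set.Ico (0:ℝ) 1) (a : ℕ → ℝ) :
    ∃ γ : ℝ → ℝ, BoundedBreaksIn γ {t₀} ∧
      ∀ k : ℕ, 1 ≤ k → ∃ Lp Lm : ℝ,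
        RightLimAt (iteratedDeriv k γ) (BreaksSet {t₀}) t₀ Lp ∧
        LeftLimAt (iteratedDeriv k γ) (BreaksSet {t₀}) t₀ Lm ∧
        Lp - Lm = a k := stmt8' t₀ ht₀ a
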